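/- Let Σ be a simplicial fan in a lattice N whose support is a full-dimensional rational polyhedral cone C, with ray generators among v_1,…,v_n. Let A be the ring of Σ-piecewise polynomial functions on C. Then A is isomorphic as a ℂ-algebra to the quotient of the polynomial ring ℂ[D_1,…,D_n] by the monomial ideal generated by the products ∏_{i∈I} D_i over all subsets I of {1,…,n} that do not form a cone of Σ. -/

import Mathlib

open scoped BigOperators

/-- The simplicial cone spanned by the vectors `v i`, `i ∈ I`. -/
def coneOf {n r : ℕ} (v : Fin n → (Fin r → ℝ)) (I : Finset (Fin n)) : Set (Fin r → ℝ) :=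
  {x | ∃ a : Fin n → ℝ, (∀ i, 0 ≤ a i) ∧ (∀ i ∉ I, a i = 0) ∧ x = ∑ i, a i • v i}

/-- The support `C` of the fan: the union of the cones of the simplicial complex `S`. -/
def fanSupport {n r : ℕ} (v : Fin n → (Fin r → ℝ)) (S : Finset (Finset (Fin n))) :
    Set (Fin r → ℝ) :=
  ⋃ I ∈ S, coneOf v I

/-- The ring `A` of `Σ`-piecewise polynomial functions on `C` (with values in `ℂ`):
functions on `C` that agree with a polynomial (evaluated at the real points) on each
cone of the fan. -/
def piecewisePoly {n r : ℕ} (v : Fin n → (Fin r → ℝ)) (S : Finset (Finset (Fin n))) :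
    Set ((fanSupport v S) → ℂ) :=
  {f | ∀ I ∈ S, ∃ p : MvPolynomial (Fin r) ℂ,
    ∀ x : fanSupport v S, (x : Fin r → ℝ) ∈ coneOf v I →
      f x = MvPolynomial.eval (fun k => ((x : Fin r → ℝ) k : ℂ)) p}

open MvPolynomial

section Aux
variable {n r : ℕ} {v : Fin n → (Fin r → ℝ)} {S : Finset (Finset (Fin n))}

/-- sum over all of Fin n of a function supported in I equals sum over the subtype I -/
lemma sum_supported {I : Finset (Fin n)} {a : Fin n → ℝ}
    (ha : ∀ i ∉ I, a i = 0) : ∑ i, a i • v i = ∑ i : I, a (i : Fin n) • v (i : Fin n) := by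
  rw [Finset.sum_coe_sort I (fun i => a i • v i)]
  symm
  apply Finset.sum_subset (Finset.subset_univ I)
  intro i _ hi
  rw [ha i hi, zero_smul]

lemma rep_unique {I : Finset (Fin n)} (hI : LinearIndependent ℝ (fun i : I => v i))
    {a b : Fin n → ℝ} (ha : ∀ i ∉ I, a i = 0) (hb : ∀ i ∉ I, b i = 0)
    (h : ∑ i, a i • v i = ∑ i, b i • v i) : a = b := by
  have h' : ∑ i : I, (a i - b i) • v (i : Fin n) = 0 := by
    have := sum_supported (v := v) ha
    have h2 := sum_supported (v := v) hb
    rw [this, h2] at h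
    simp only [sub_smul]
    rw [Finset.sum_sub_distrib, h, sub_self]
  have := Fintype.linearIndependent_iff.mp hI (fun i => a i - b i) h'
  funext i
  by_cases hi : i ∈ I
  · have := this ⟨i, hi⟩
    linarith [sub_eq_zero.mp this]
  · rw [ha i hi, hb i hi]

lemma exists_rep (x : fanSupport v S) :
    ∃ a : Fin n → ℝ, (∀ i, 0 ≤ a i) ∧ (∃ I ∈ S, ∀ i ∉ I, a i = 0) ∧
      (x : Fin r → ℝ) = ∑ i, a i • v i := by
  have hx := x.2
  simp only [fanSupport, Set.mem_iUnion] at hx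
  obtain ⟨I, hI, a, h1, h2, h3⟩ := hx
  exact ⟨a, h1, ⟨I, hI, h2⟩, h3⟩

noncomputable def fanCoords (v : Fin n → (Fin r → ℝ)) (S : Finset (Finset (Fin n)))
    (x : fanSupport v S) : Fin n → ℝ :=
  Classical.choose (exists_rep x)

lemma fanCoords_spec (x : fanSupport v S) :
    (∀ i, 0 ≤ fanCoords v S x i) ∧ (∃ I ∈ S, ∀ i ∉ I, fanCoords v S x i = 0) ∧
      (x : Fin r → ℝ) = ∑ i, fanCoords v S x i • v i :=
  Classical.choose_spec (exists_rep x)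

/-- uniqueness of fan coordinates, using the fan gluing condition -/
lemma fanCoords_eq (hind : ∀ I ∈ S, LinearIndependent ℝ (fun i : I => v i))
    (hglue : ∀ I ∈ S, ∀ J ∈ S, coneOf v I ∩ coneOf v J = coneOf v (I ∩ J))
    {I : Finset (Fin n)} (hI : I ∈ S) (x : fanSupport v S)
    {a : Fin n → ℝ} (ha0 : ∀ i, 0 ≤ a i) (has : ∀ i ∉ I, a i = 0)
    (hx : (x : Fin r → ℝ) = ∑ i, a i • v i) : fanCoords v S x = a := by
  obtain ⟨hb0, ⟨J, hJ, hbs⟩, hbx⟩ := fanCoords_spec x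
  have hxIJ : (x : Fin r → ℝ) ∈ coneOf v I ∩ coneOf v J :=
    ⟨⟨a, ha0, has, hx⟩, ⟨fanCoords v S x, hb0, hbs, hbx⟩⟩
  rw [hglue I hI J hJ] at hxIJ
  obtain ⟨c, hc0, hcs, hcx⟩ := hxIJ
  have hcI : ∀ i ∉ I, c i = 0 := fun i hi => hcs i (fun h => hi (Finset.mem_of_mem_inter_left h))
  have hcJ : ∀ i ∉ J, c i = 0 := fun i hi => hcs i (fun h => hi (Finset.mem_of_mem_inter_right h))
  have e1 : a = c := rep_unique (hind I hI) has hcI (hx ▸ hcx ▸ rfl)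
  have e2 : fanCoords v S x = c := rep_unique (hind J hJ) hbs hcJ (hbx ▸ hcx ▸ rfl)
  rw [e1, e2]

end Aux

lemma orthant_zero : ∀ {m : ℕ} (p : MvPolynomial (Fin m) ℂ),
    (∀ a : Fin m → ℝ, (∀ i, 0 ≤ a i) → eval (fun i => (a i : ℂ)) p = 0) → p = 0 := by
  intro m
  induction m with
  | zero =>
    intro p h
    apply MvPolynomial.funext
    intro x
    have hx : x = fun i => ((0:ℝ) : ℂ) := funext fun i => i.elim0
    rw [hx, map_zero]
    exact h (fun _ => 0) (fun i => le_refl 0)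
  | succ m ih =>
    intro p h
    have hq : ∀ a : Fin m → ℝ, (∀ i, 0 ≤ a i) →
        Polynomial.map (eval (fun i => (a i : ℂ))) ((MvPolynomial.finSuccEquiv ℂ m) p) = 0 := by
      intro a ha
      apply Polynomial.eq_zero_of_infinite_isRoot
      apply Set.Infinite.mono (s := (fun t : ℝ => (t : ℂ)) '' (Set.Ici (0:ℝ)))
      · rintro z ⟨t, ht, rfl⟩
        simp only [Set.mem_setOf_eq, Polynomial.IsRoot]
        rw [← MvPolynomial.eval_eq_eval_mv_eval']
        have hv := h (Fin.cons t a) (fun i => by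
          refine Fin.cases ?_ ?_ i
          · exact ht
          · intro j; simpa using ha j)
        have hpt : (Fin.cons (t:ℂ) (fun i => (a i : ℂ)) : Fin (m+1) → ℂ)
            = fun i => (((Fin.cons t a : Fin (m+1) → ℝ) i : ℝ) : ℂ) := by
          funext i
          refine Fin.cases ?_ ?_ i <;> simp
        rw [hpt]
        exact hv
      · exact Set.Infinite.image (fun x _ y _ h => by exact_mod_cast h) (Set.Ici_infinite 0)
    have hcoeff : (MvPolynomial.finSuccEquiv ℂ m) p = 0 := by
      apply Polynomial.ext
      intro k
      simp only [Polynomial.coeff_zero]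
      apply ih
      intro a ha
      have h2 := congrArg (fun q => Polynomial.coeff q k) (hq a ha)
      simpa [Polynomial.coeff_map] using h2
    exact (MvPolynomial.finSuccEquiv ℂ m).injective (by simpa using hcoeff)

section MonomialLemmas
variable {n : ℕ}

lemma aeval_eq_eval (g : Fin n → ℂ) (p : MvPolynomial (Fin n) ℂ) : aeval g p = eval g p := by
  rw [MvPolynomial.aeval_def, MvPolynomial.eval, Algebra.algebraMap_self]; rfl

/-- monomials evaluate/substitute to zero when some exponent variable goes to zero -/
lemma aeval_monomial_zero {A : Type*} [CommRing A] [Algebra ℂ A] (f : Fin n → A)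
    (m : Fin n →₀ ℕ) (c : ℂ) {i : Fin n} (hi : m i ≠ 0) (hfi : f i = 0) :
    aeval f (monomial m c) = 0 := by
  rw [MvPolynomial.aeval_monomial]
  have : (m.prod fun i k => f i ^ k) = 0 := by
    apply Finset.prod_eq_zero (Finsupp.mem_support_iff.mpr hi)
    show f i ^ m i = 0
    rw [hfi, zero_pow hi]
  rw [this, mul_zero]

lemma aeval_monomial_self (sub : Fin n → MvPolynomial (Fin n) ℂ)
    (m : Fin n →₀ ℕ) (c : ℂ) (h : ∀ i ∈ m.support, sub i = X i) :
    aeval sub (monomial m c) = monomial m c := by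
  rw [MvPolynomial.aeval_monomial, MvPolynomial.monomial_eq]
  congr 1
  apply Finset.prod_congr rfl
  intro i hi
  show sub i ^ m i = X i ^ m i
  rw [h i hi]

/-- a monomial whose support is `J` factors through `∏_{i ∈ J} X i` -/
lemma monomial_eq_prod_mul (m : Fin n →₀ ℕ) (c : ℂ) :
    monomial m c = (∏ i ∈ m.support, (X i : MvPolynomial (Fin n) ℂ)) *
      (C c * ∏ i ∈ m.support, (X i : MvPolynomial (Fin n) ℂ) ^ (m i - 1)) := by
  rw [MvPolynomial.monomial_eq, Finsupp.prod]
  rw [mul_left_comm, ← Finset.prod_mul_distrib]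
  congr 1
  apply Finset.prod_congr rfl
  intro i hi
  rw [← pow_succ']
  congr 1
  have := Finsupp.mem_support_iff.mp hi
  omega

lemma monomial_mem_span {S : Finset (Finset (Fin n))} (m : Fin n →₀ ℕ) (c : ℂ)
    (hm : m.support ∉ S) :
    monomial m c ∈ Ideal.span ((fun I : Finset (Fin n) =>
      ∏ i ∈ I, (MvPolynomial.X i : MvPolynomial (Fin n) ℂ)) '' {I | I ∉ S}) := by
  rw [monomial_eq_prod_mul]
  exact Ideal.mul_mem_right _ _ (Ideal.subset_span ⟨m.support, hm, rfl⟩)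

/-- the masked polynomial: substitute `X i ↦ 0` for `i ∉ J` -/
noncomputable def maskPoly (J : Finset (Fin n)) (p : MvPolynomial (Fin n) ℂ) :
    MvPolynomial (Fin n) ℂ :=
  aeval (fun i => if i ∈ J then X i else 0) p

lemma maskPoly_eq_sum (J : Finset (Fin n)) (p : MvPolynomial (Fin n) ℂ) :
    maskPoly J p = ∑ m ∈ p.support.filter (fun m => m.support ⊆ J),
      monomial m (coeff m p) := by
  rw [maskPoly]
  conv_lhs => rw [← MvPolynomial.support_sum_monomial_coeff p]
  rw [map_sum, ← Finset.sum_filter_add_sum_filter_not p.support (fun m => m.support ⊆ J)]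
  have h2 : ∑ m ∈ p.support.filter (fun m => ¬ m.support ⊆ J),
      aeval (fun i => if i ∈ J then (X i : MvPolynomial (Fin n) ℂ) else 0)
        (monomial m (coeff m p)) = 0 := by
    apply Finset.sum_eq_zero
    intro m hm
    obtain ⟨hm1, hm2⟩ := Finset.mem_filter.mp hm
    obtain ⟨i, hi1, hi2⟩ := Finset.not_subset.mp hm2
    exact aeval_monomial_zero _ _ _ (Finsupp.mem_support_iff.mp hi1) (if_neg hi2)
  rw [h2, add_zero]
  apply Finset.sum_congr rfl
  intro m hm
  obtain ⟨hm1, hm2⟩ := Finset.mem_filter.mp hm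
  exact aeval_monomial_self _ _ _ (fun i hi => if_pos (hm2 hi))

lemma coeff_maskPoly (J : Finset (Fin n)) (p : MvPolynomial (Fin n) ℂ)
    (m : Fin n →₀ ℕ) (hm : m.support ⊆ J) : coeff m (maskPoly J p) = coeff m p := by
  classical
  rw [maskPoly_eq_sum]
  rw [MvPolynomial.coeff_sum]
  by_cases hmem : m ∈ p.support
  · rw [Finset.sum_eq_single m]
    · rw [MvPolynomial.coeff_monomial, if_pos rfl]
    · intro b _ hb
      rw [MvPolynomial.coeff_monomial, if_neg hb]
    · intro hnot
      exact absurd (Finset.mem_filter.mpr ⟨hmem, hm⟩) hnot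
  · have h0 : coeff m p = 0 := by
      by_contra h
      exact hmem (MvPolynomial.mem_support_iff.mpr h)
    rw [h0]
    apply Finset.sum_eq_zero
    intro b hb
    rw [MvPolynomial.coeff_monomial]
    split
    · next heq =>
        subst heq
        exact absurd (Finset.mem_filter.mp hb).1 hmem
    · rfl

lemma eval_maskPoly (J : Finset (Fin n)) (p : MvPolynomial (Fin n) ℂ) (b : Fin n → ℂ) :
    eval b (maskPoly J p) = eval (fun i => if i ∈ J then b i else 0) p := by
  rw [← aeval_eq_eval, ← aeval_eq_eval, maskPoly]
  rw [show (aeval b : MvPolynomial (Fin n) ℂ →ₐ[ℂ] ℂ)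
      ((aeval (fun i => if i ∈ J then X i else 0)) p)
    = ((aeval b).comp (aeval (fun i => if i ∈ J then (X i : MvPolynomial (Fin n) ℂ) else 0))) p
    from rfl, MvPolynomial.comp_aeval]
  have hfe : (fun i => (aeval b : MvPolynomial (Fin n) ℂ →ₐ[ℂ] ℂ)
      (if i ∈ J then (X i : MvPolynomial (Fin n) ℂ) else 0))
      = fun i => if i ∈ J then b i else 0 := by
    funext i
    split <;> simp
  rw [hfe]

end MonomialLemmas
section Main
variable {n r : ℕ} (v : Fin n → (Fin r → ℝ)) (S : Finset (Finset (Fin n)))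

/-- The Courant functions, complex valued. -/
noncomputable def Dc : Fin n → ((fanSupport v S) → ℂ) :=
  fun i x => (fanCoords v S x i : ℂ)

lemma apply_aeval (p : MvPolynomial (Fin n) ℂ) (x : fanSupport v S) :
    aeval (Dc v S) p x = eval (fun i => (fanCoords v S x i : ℂ)) p := by
  have h1 : aeval (Dc v S) p x
      = (Pi.evalAlgHom ℂ (fun _ : fanSupport v S => ℂ) x).comp (aeval (Dc v S)) p := rfl
  rw [h1, MvPolynomial.comp_aeval]
  rw [aeval_eq_eval]
  rfl

lemma mem_fanSupport_of {J : Finset (Fin n)} (hJ : J ∈ S) {a : Fin n → ℝ}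
    (ha0 : ∀ i, 0 ≤ a i) (has : ∀ i ∉ J, a i = 0) :
    (∑ i, a i • v i) ∈ fanSupport v S := by
  simp only [fanSupport, Set.mem_iUnion]
  exact ⟨J, hJ, a, ha0, has, rfl⟩

variable {v S}

lemma maskPoly_eq_zero
    (hind : ∀ I ∈ S, LinearIndependent ℝ (fun i : I => v i))
    (hglue : ∀ I ∈ S, ∀ J ∈ S, coneOf v I ∩ coneOf v J = coneOf v (I ∩ J))
    {p : MvPolynomial (Fin n) ℂ} (hp : aeval (Dc v S) p = 0)
    {J : Finset (Fin n)} (hJ : J ∈ S) : maskPoly J p = 0 := by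
  apply orthant_zero
  intro b hb
  rw [eval_maskPoly]
  set a : Fin n → ℝ := fun i => if i ∈ J then b i else 0 with ha
  have ha0 : ∀ i, 0 ≤ a i := fun i => by rw [ha]; dsimp only; split; exacts [hb i, le_refl 0]
  have has : ∀ i ∉ J, a i = 0 := fun i hi => by rw [ha]; dsimp only; rw [if_neg hi]
  set x : fanSupport v S := ⟨∑ i, a i • v i, mem_fanSupport_of v S hJ ha0 has⟩ with hx
  have hco : fanCoords v S x = a := fanCoords_eq hind hglue hJ x ha0 has rfl
  have h0 : aeval (Dc v S) p x = 0 := by rw [hp]; rfl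
  rw [apply_aeval, hco] at h0
  have hfe : (fun i => if i ∈ J then ((b i : ℝ) : ℂ) else 0) = fun i => ((a i : ℝ) : ℂ) := by
    funext i
    rw [ha]
    dsimp only
    split <;> simp
  rw [hfe]
  exact h0

lemma ker_le_span
    (hdc : ∀ I ∈ S, ∀ J ⊆ I, J ∈ S)
    (hind : ∀ I ∈ S, LinearIndependent ℝ (fun i : I => v i))
    (hglue : ∀ I ∈ S, ∀ J ∈ S, coneOf v I ∩ coneOf v J = coneOf v (I ∩ J))
    {p : MvPolynomial (Fin n) ℂ} (hp : aeval (Dc v S) p = 0) :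
    p ∈ Ideal.span ((fun I : Finset (Fin n) =>
      ∏ i ∈ I, (MvPolynomial.X i : MvPolynomial (Fin n) ℂ)) '' {I | I ∉ S}) := by
  rw [← MvPolynomial.support_sum_monomial_coeff p]
  apply Ideal.sum_mem
  intro m hm
  by_cases hms : m.support ∈ S
  · have hc0 : coeff m p = 0 := by
      rw [← coeff_maskPoly m.support p m (subset_refl _),
        maskPoly_eq_zero hind hglue hp hms, MvPolynomial.coeff_zero]
    rw [hc0, map_zero]
    exact Ideal.zero_mem _
  · exact monomial_mem_span m (coeff m p) hms

end Main

section DevE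
variable {n r : ℕ} {v : Fin n → (Fin r → ℝ)} {S : Finset (Finset (Fin n))}
lemma span_le_ker (hdc : ∀ I ∈ S, ∀ J ⊆ I, J ∈ S)
    {q : MvPolynomial (Fin n) ℂ}
    (hq : q ∈ Ideal.span ((fun I : Finset (Fin n) =>
      ∏ i ∈ I, (MvPolynomial.X i : MvPolynomial (Fin n) ℂ)) '' {I | I ∉ S})) :
    aeval (Dc v S) q = 0 := by
  have hle : Ideal.span ((fun I : Finset (Fin n) =>
      ∏ i ∈ I, (MvPolynomial.X i : MvPolynomial (Fin n) ℂ)) '' {I | I ∉ S})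
      ≤ RingHom.ker (aeval (Dc v S) : MvPolynomial (Fin n) ℂ →ₐ[ℂ] _).toRingHom := by
    rw [Ideal.span_le]
    rintro _ ⟨I, hI, rfl⟩
    simp only [SetLike.mem_coe, RingHom.mem_ker, AlgHom.toRingHom_eq_coe, RingHom.coe_coe]
    funext x
    have : aeval (Dc v S) (∏ i ∈ I, (X i : MvPolynomial (Fin n) ℂ)) x
        = ∏ i ∈ I, (fanCoords v S x i : ℂ) := by
      rw [apply_aeval]
      rw [map_prod]
      simp [MvPolynomial.eval_X]
    rw [this]
    obtain ⟨_, ⟨J, hJ, hsupp⟩, _⟩ := fanCoords_spec x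
    have hIJ : ¬ I ⊆ J := fun hsub => hI (hdc J hJ I hsub)
    obtain ⟨i, hiI, hiJ⟩ := Finset.not_subset.mp hIJ
    rw [Finset.prod_eq_zero hiI]
    · rfl
    · rw [hsupp i hiJ]; exact Complex.ofReal_zero
  have := hle hq
  simpa using this

/-- a left inverse for the vectors of a cone: `g (v i) = eᵢ` for `i ∈ I`. -/
lemma exists_dual {I : Finset (Fin n)} (hI : LinearIndependent ℝ (fun i : I => v i)) :
    ∃ g : (Fin r → ℝ) →ₗ[ℝ] (↥I → ℝ),
      ∀ a : Fin n → ℝ, (∀ i ∉ I, a i = 0) → ∀ i : I, g (∑ j, a j • v j) i = a i := by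
  set f : (↥I → ℝ) →ₗ[ℝ] (Fin r → ℝ) :=
    Fintype.linearCombination ℝ (fun i : I => v i) with hf
  have hker : LinearMap.ker f = ⊥ := by
    rw [LinearMap.ker_eq_bot']
    intro c hc
    rw [hf] at hc
    simp only [Fintype.linearCombination_apply] at hc
    have := Fintype.linearIndependent_iff.mp hI c hc
    funext i
    exact this i
  obtain ⟨g, hg⟩ := LinearMap.exists_leftInverse_of_injective f hker
  refine ⟨g, fun a ha i => ?_⟩
  have h1 : (∑ j, a j • v j) = f (fun i : I => a i) := by
    rw [hf]
    simp only [Fintype.linearCombination_apply]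
    exact sum_supported ha
  rw [h1, ← LinearMap.comp_apply, hg, LinearMap.id_apply]

lemma range_subset_pp
    (hind : ∀ I ∈ S, LinearIndependent ℝ (fun i : I => v i))
    (hglue : ∀ I ∈ S, ∀ J ∈ S, coneOf v I ∩ coneOf v J = coneOf v (I ∩ J))
    (p : MvPolynomial (Fin n) ℂ) : aeval (Dc v S) p ∈ piecewisePoly v S := by
  intro I hI
  obtain ⟨g, hg⟩ := exists_dual (hind I hI)
  refine ⟨aeval (fun i : Fin n => if h : i ∈ I
    then (∑ k, MvPolynomial.C ((g (Pi.single k 1)) ⟨i, h⟩ : ℂ) * X k) else 0) p, ?_⟩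
  intro x hx
  obtain ⟨a, ha0, has, hxa⟩ := hx
  have hco : fanCoords v S x = a := fanCoords_eq hind hglue hI x ha0 has hxa
  rw [apply_aeval, hco]
  -- compose evaluation with substitution
  rw [← _root_.aeval_eq_eval (fun k => ((x : Fin r → ℝ) k : ℂ)),
    show (aeval (fun k => ((x : Fin r → ℝ) k : ℂ)) : MvPolynomial (Fin r) ℂ →ₐ[ℂ] ℂ)
        ((aeval (fun i : Fin n => if h : i ∈ I
          then (∑ k, MvPolynomial.C ((g (Pi.single k 1)) ⟨i, h⟩ : ℂ) * X k) else 0)) p)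
      = ((aeval (fun k => ((x : Fin r → ℝ) k : ℂ))).comp
          (aeval (fun i : Fin n => if h : i ∈ I
          then (∑ k, MvPolynomial.C ((g (Pi.single k 1)) ⟨i, h⟩ : ℂ) * X k) else 0))) p
      from rfl,
    MvPolynomial.comp_aeval, _root_.aeval_eq_eval]
  have hpt : (fun i : Fin n => (eval (fun k => ((x : Fin r → ℝ) k : ℂ)))
      (if h : i ∈ I then (∑ k, MvPolynomial.C ((g (Pi.single k 1)) ⟨i, h⟩ : ℂ) * X k) else 0))
      = fun i => ((a i : ℝ) : ℂ) := by
    funext i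
    by_cases hiI : i ∈ I
    · rw [dif_pos hiI]
      have hgx : g (x : Fin r → ℝ) ⟨i, hiI⟩ = a i := by
        rw [hxa]; exact hg a has ⟨i, hiI⟩
      have hdecomp : (x : Fin r → ℝ) = ∑ k, (x : Fin r → ℝ) k • (Pi.single k (1:ℝ) : Fin r → ℝ) := by
        conv_lhs => rw [← Finset.univ_sum_single (x : Fin r → ℝ)]
        exact Finset.sum_congr rfl (fun k _ => by rw [← Pi.single_smul, smul_eq_mul, mul_one])
      have hsum : a i = ∑ k, (x : Fin r → ℝ) k * g (Pi.single k 1) ⟨i, hiI⟩ := by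
        rw [← hgx]
        conv_lhs => rw [hdecomp]
        rw [map_sum, Finset.sum_apply]
        apply Finset.sum_congr rfl
        intro k _
        rw [map_smul]
        rfl
      rw [map_sum, hsum]
      push_cast
      apply Finset.sum_congr rfl
      intro k _
      rw [map_mul, eval_C, eval_X]
      ring
    · rw [dif_neg hiI, map_zero, has i hiI, Complex.ofReal_zero]
  have hgoal : (fun i : Fin n => (aeval (fun k => ((x : Fin r → ℝ) k : ℂ)))
      (if h : i ∈ I then (∑ k, MvPolynomial.C ((g (Pi.single k 1)) ⟨i, h⟩ : ℂ) * X k) else 0))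
      = fun i => ((a i : ℝ) : ℂ) := by
    rw [← hpt]
    funext i
    rw [_root_.aeval_eq_eval]
  rw [hgoal]

end DevE

section DevF
variable {n r : ℕ} {v : Fin n → (Fin r → ℝ)} {S : Finset (Finset (Fin n))}

/-- coefficient of a filtered sum of monomials -/
lemma coeff_selSum (Q : MvPolynomial (Fin n) ℂ) (pr : (Fin n →₀ ℕ) → Prop)
    [DecidablePred pr] (m : Fin n →₀ ℕ) :
    coeff m (∑ m' ∈ Q.support.filter pr, monomial m' (coeff m' Q))
      = if pr m then coeff m Q else 0 := by
  classical
  rw [MvPolynomial.coeff_sum]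
  by_cases hmem : m ∈ Q.support.filter pr
  · rw [Finset.sum_eq_single m]
    · rw [MvPolynomial.coeff_monomial, if_pos rfl, if_pos (Finset.mem_filter.mp hmem).2]
    · intro b _ hb
      rw [MvPolynomial.coeff_monomial, if_neg hb]
    · intro hc; exact absurd hmem hc
  · have h0 : ∑ m' ∈ Q.support.filter pr, coeff m (monomial m' (coeff m' Q)) = 0 := by
      apply Finset.sum_eq_zero
      intro b hb
      rw [MvPolynomial.coeff_monomial]
      split
      · next heq => subst heq; exact absurd hb hmem
      · rfl
    rw [h0]
    split
    · next hpr =>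
        by_cases hsup : m ∈ Q.support
        · exact absurd (Finset.mem_filter.mpr ⟨hsup, hpr⟩) hmem
        · exact (MvPolynomial.notMem_support_iff.mp hsup).symm
    · rfl

/-- the part of `Q` consisting of monomials with support exactly `I` -/
noncomputable def exactPart (I : Finset (Fin n)) (Q : MvPolynomial (Fin n) ℂ) :
    MvPolynomial (Fin n) ℂ :=
  ∑ m ∈ Q.support.filter (fun m => m.support = I), monomial m (coeff m Q)

lemma coeff_exactPart (I : Finset (Fin n)) (Q : MvPolynomial (Fin n) ℂ) (m : Fin n →₀ ℕ) :
    coeff m (exactPart I Q) = if m.support = I then coeff m Q else 0 :=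
  coeff_selSum Q _ m

lemma coeff_maskPoly' (J : Finset (Fin n)) (Q : MvPolynomial (Fin n) ℂ) (m : Fin n →₀ ℕ) :
    coeff m (maskPoly J Q) = if m.support ⊆ J then coeff m Q else 0 := by
  rw [maskPoly_eq_sum]
  exact coeff_selSum Q _ m

/-- a polynomial fixed by masking splits as the sum of its exact parts -/
lemma sum_exactPart {J : Finset (Fin n)} {Q : MvPolynomial (Fin n) ℂ}
    (hQ : maskPoly J Q = Q) :
    ∑ I ∈ J.powerset, exactPart I Q = Q := by
  classical
  conv_rhs => rw [← hQ, maskPoly_eq_sum]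
  unfold exactPart
  rw [← Finset.sum_fiberwise_of_maps_to (g := fun m : Fin n →₀ ℕ => m.support)
    (t := J.powerset) (s := Q.support.filter (fun m => m.support ⊆ J))
    (fun m hm => Finset.mem_powerset.mpr (Finset.mem_filter.mp hm).2)
    (fun m => monomial m (coeff m Q))]
  apply Finset.sum_congr rfl
  intro I hI
  apply Finset.sum_congr
  · rw [Finset.filter_filter]
    apply Finset.filter_congr
    intro m _
    constructor
    · intro h; exact ⟨h ▸ Finset.mem_powerset.mp hI, h⟩
    · intro h; exact h.2
  · intros; rfl

lemma eval_exactPart_zero {a : Fin n → ℂ} {I : Finset (Fin n)} {Q : MvPolynomial (Fin n) ℂ}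
    (h : ∃ i ∈ I, a i = 0) : eval a (exactPart I Q) = 0 := by
  obtain ⟨i, hiI, hai⟩ := h
  unfold exactPart
  rw [map_sum]
  apply Finset.sum_eq_zero
  intro m hm
  have hms : m.support = I := (Finset.mem_filter.mp hm).2
  rw [← aeval_eq_eval]
  exact aeval_monomial_zero a m _ (Finsupp.mem_support_iff.mp (hms ▸ hiI)) hai

/-- the substitution sending the ambient coordinates into the Courant variables of cone `J` -/
noncomputable def coneSub (v : Fin n → (Fin r → ℝ)) (J : Finset (Fin n)) :
    Fin r → MvPolynomial (Fin n) ℂ :=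
  fun k => ∑ i ∈ J, MvPolynomial.C ((v i k : ℝ) : ℂ) * X i

lemma maskPoly_coneSub (J : Finset (Fin n)) (q : MvPolynomial (Fin r) ℂ) :
    maskPoly J (aeval (coneSub v J) q) = aeval (coneSub v J) q := by
  rw [maskPoly, show (aeval (fun i => if i ∈ J then (X i : MvPolynomial (Fin n) ℂ) else 0))
      ((aeval (coneSub v J)) q)
    = ((aeval (fun i => if i ∈ J then (X i : MvPolynomial (Fin n) ℂ) else 0)).comp
        (aeval (coneSub v J))) q from rfl, MvPolynomial.comp_aeval]
  have hfe : (fun k => (aeval (fun i => if i ∈ J then (X i : MvPolynomial (Fin n) ℂ) else 0))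
      (coneSub v J k)) = coneSub v J := by
    funext k
    unfold coneSub
    rw [map_sum]
    apply Finset.sum_congr rfl
    intro i hi
    rw [map_mul, aeval_C, aeval_X, if_pos hi]
    rfl
  rw [hfe]

/-- evaluation of the substituted polynomial at coordinates supported in `J` -/
lemma eval_coneSub {J : Finset (Fin n)} {a : Fin n → ℝ} (has : ∀ i ∉ J, a i = 0)
    (q : MvPolynomial (Fin r) ℂ) :
    eval (fun i => (a i : ℂ)) (aeval (coneSub v J) q)
      = eval (fun k => ((∑ i, a i • v i) k : ℂ)) q := by
  rw [← _root_.aeval_eq_eval (fun i => (a i : ℂ)),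
    show (aeval (fun i => ((a i : ℝ) : ℂ)) : MvPolynomial (Fin n) ℂ →ₐ[ℂ] ℂ)
        ((aeval (coneSub v J)) q)
      = ((aeval (fun i => ((a i : ℝ) : ℂ))).comp (aeval (coneSub v J))) q from rfl,
    MvPolynomial.comp_aeval, _root_.aeval_eq_eval]
  have hfe : (fun k => (aeval (fun i => ((a i : ℝ) : ℂ)) : MvPolynomial (Fin n) ℂ →ₐ[ℂ] ℂ)
      (coneSub v J k)) = fun k => (((∑ i, a i • v i) k : ℝ) : ℂ) := by
    funext k
    unfold coneSub
    rw [map_sum]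
    have hxk : (∑ i, a i • v i) k = ∑ i ∈ J, v i k * a i := by
      rw [Finset.sum_apply]
      have step : ∀ i : Fin n, (a i • v i) k = v i k * a i := fun i => mul_comm (a i) (v i k)
      rw [Finset.sum_congr rfl (fun i _ => step i)]
      symm
      apply Finset.sum_subset (Finset.subset_univ J)
      intro i _ hi
      rw [has i hi, mul_zero]
    rw [hxk]
    push_cast
    apply Finset.sum_congr rfl
    intro i hi
    rw [map_mul, aeval_C, aeval_X]
    simp [_root_.aeval_eq_eval]
  rw [hfe]

end DevF

section DevH
variable {n r : ℕ} {v : Fin n → (Fin r → ℝ)} {S : Finset (Finset (Fin n))}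

lemma pp_subset_range
    (hdc : ∀ I ∈ S, ∀ J ⊆ I, J ∈ S)
    (hind : ∀ I ∈ S, LinearIndependent ℝ (fun i : I => v i))
    (hglue : ∀ I ∈ S, ∀ J ∈ S, coneOf v I ∩ coneOf v J = coneOf v (I ∩ J))
    {f : (fanSupport v S) → ℂ} (hf : f ∈ piecewisePoly v S) :
    ∃ p : MvPolynomial (Fin n) ℂ, aeval (Dc v S) p = f := by
  classical
  choose pfun hpfun using hf
  set PJ : Finset (Fin n) → MvPolynomial (Fin n) ℂ :=
    fun I => if hI : I ∈ S then aeval (coneSub v I) (pfun I hI) else 0 with hPJ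
  have E1 : ∀ I (hI : I ∈ S) (a : Fin n → ℝ) (ha0 : ∀ i, 0 ≤ a i) (has : ∀ i ∉ I, a i = 0),
      eval (fun i => (a i : ℂ)) (PJ I)
        = f ⟨∑ i, a i • v i, mem_fanSupport_of v S hI ha0 has⟩ := by
    intro I hI a ha0 has
    rw [hPJ]
    dsimp only
    rw [dif_pos hI, eval_coneSub has]
    exact (hpfun I hI ⟨∑ i, a i • v i, mem_fanSupport_of v S hI ha0 has⟩ ⟨a, ha0, has, rfl⟩).symm
  have compat : ∀ I, I ∈ S → ∀ J, J ∈ S → I ⊆ J → maskPoly I (PJ J) = maskPoly I (PJ I) := by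
    intro I hI J hJ hIJ
    have hz : maskPoly I (PJ J) - maskPoly I (PJ I) = 0 := by
      apply orthant_zero
      intro b hb
      rw [map_sub, eval_maskPoly, eval_maskPoly]
      set a : Fin n → ℝ := fun i => if i ∈ I then b i else 0 with ha
      have ha0 : ∀ i, 0 ≤ a i := fun i => by
        rw [ha]; dsimp only; split; exacts [hb i, le_refl 0]
      have hasI : ∀ i ∉ I, a i = 0 := fun i hi => by rw [ha]; dsimp only; rw [if_neg hi]
      have hasJ : ∀ i ∉ J, a i = 0 := fun i hi => hasI i (fun h => hi (hIJ h))
      have hpt : (fun i => if i ∈ I then ((b i : ℝ) : ℂ) else 0) = fun i => ((a i : ℝ) : ℂ) := by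
        funext i
        rw [ha]
        dsimp only
        split <;> simp
      rw [hpt, E1 J hJ a ha0 hasJ, E1 I hI a ha0 hasI, sub_self]
    have := sub_eq_zero.mp hz
    exact this
  have hqeq : ∀ I, I ∈ S → ∀ J, J ∈ S → I ⊆ J → exactPart I (PJ J) = exactPart I (PJ I) := by
    intro I hI J hJ hIJ
    apply MvPolynomial.ext
    intro m
    rw [coeff_exactPart, coeff_exactPart]
    split
    · next hms =>
        have hmI : m.support ⊆ I := le_of_eq hms
        rw [← coeff_maskPoly I (PJ J) m hmI, compat I hI J hJ hIJ,
          coeff_maskPoly I (PJ I) m hmI]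
    · rfl
  refine ⟨∑ I ∈ S, exactPart I (PJ I), ?_⟩
  funext x
  rw [apply_aeval]
  obtain ⟨ha0, ⟨J, hJ, has⟩, hx⟩ := fanCoords_spec x
  rw [map_sum]
  rw [← Finset.sum_filter_add_sum_filter_not S (fun I => I ⊆ J)]
  have h2 : ∑ I ∈ S.filter (fun I => ¬ I ⊆ J),
      eval (fun i => (fanCoords v S x i : ℂ)) (exactPart I (PJ I)) = 0 := by
    apply Finset.sum_eq_zero
    intro I hI
    obtain ⟨hIS, hIJ⟩ := Finset.mem_filter.mp hI
    obtain ⟨i, hiI, hiJ⟩ := Finset.not_subset.mp hIJ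
    exact eval_exactPart_zero ⟨i, hiI, by rw [has i hiJ]; exact Complex.ofReal_zero⟩
  rw [h2, add_zero]
  have h3 : ∑ I ∈ S.filter (fun I => I ⊆ J),
      eval (fun i => (fanCoords v S x i : ℂ)) (exactPart I (PJ I))
      = ∑ I ∈ S.filter (fun I => I ⊆ J),
      eval (fun i => (fanCoords v S x i : ℂ)) (exactPart I (PJ J)) := by
    apply Finset.sum_congr rfl
    intro I hI
    rw [hqeq I (Finset.mem_filter.mp hI).1 J hJ (Finset.mem_filter.mp hI).2]
  rw [h3, ← map_sum]
  have h4 : S.filter (fun I => I ⊆ J) = J.powerset := by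
    ext I
    rw [Finset.mem_filter, Finset.mem_powerset]
    exact ⟨fun h => h.2, fun h => ⟨hdc J hJ I h, h⟩⟩
  have hmask : maskPoly J (PJ J) = PJ J := by
    rw [hPJ]
    dsimp only
    rw [dif_pos hJ]
    exact maskPoly_coneSub J (pfun J hJ)
  rw [h4, sum_exactPart hmask]
  rw [E1 J hJ (fanCoords v S x) ha0 has]
  congr 1
  exact Subtype.ext hx.symm

end DevH

/-- Stanley–Reisner presentation of piecewise polynomials: for a simplicial
fan `Σ` (given by a simplicial complex `S` on `{1,…,n}` and vectors `v i`) whose support is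
a full-dimensional cone `C`, the ring `A` of `Σ`-piecewise polynomial functions on `C` is
isomorphic as a `ℂ`-algebra to `ℂ[D₁,…,D_n] / (∏_{i∈I} D_i : I ∉ Σ)`. -/
theorem stmt0 {n r : ℕ} (v : Fin n → (Fin r → ℝ)) (S : Finset (Finset (Fin n)))
    -- `S` is a simplicial complex
    (hdc : ∀ I ∈ S, ∀ J ⊆ I, J ∈ S) (hne : ∅ ∈ S)
    -- the cones are simplicial
    (hind : ∀ I ∈ S, LinearIndependent ℝ (fun i : I => v i))
    -- the cones form a fan: they intersect along common faces
    (hglue : ∀ I ∈ S, ∀ J ∈ S, coneOf v I ∩ coneOf v J = coneOf v (I ∩ J))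
    -- the support is full-dimensional
    (hfull : ∃ I ∈ S, I.card = r) :
    ∃ φ : (MvPolynomial (Fin n) ℂ ⧸
        Ideal.span ((fun I : Finset (Fin n) =>
          ∏ i ∈ I, (MvPolynomial.X i : MvPolynomial (Fin n) ℂ)) ''
          {I | I ∉ S})) →ₐ[ℂ] ((fanSupport v S) → ℂ),
      Function.Injective φ ∧ Set.range φ = piecewisePoly v S := by
  set Idl := Ideal.span ((fun I : Finset (Fin n) =>
    ∏ i ∈ I, (MvPolynomial.X i : MvPolynomial (Fin n) ℂ)) '' {I | I ∉ S}) with hIdl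
  refine ⟨Ideal.Quotient.liftₐ Idl (aeval (Dc v S)) (fun q hq => span_le_ker hdc hq), ?_, ?_⟩
  · rw [injective_iff_map_eq_zero]
    intro q hq0
    obtain ⟨p, rfl⟩ := Ideal.Quotient.mk_surjective q
    change aeval (Dc v S) p = 0 at hq0
    rw [show (Ideal.Quotient.mk Idl) p = 0 ↔ p ∈ Idl from Ideal.Quotient.eq_zero_iff_mem]
    exact ker_le_span hdc hind hglue hq0
  · ext f
    constructor
    · rintro ⟨q, rfl⟩
      obtain ⟨p, rfl⟩ := Ideal.Quotient.mk_surjective q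
      change aeval (Dc v S) p ∈ piecewisePoly v S
      exact range_subset_pp hind hglue p
    · intro hf
      obtain ⟨p, hp⟩ := pp_subset_range hdc hind hglue hf
      exact ⟨Ideal.Quotient.mk Idl p, by change aeval (Dc v S) p = f; exact hp⟩
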